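/- Let A = K·1_A ⊕ A₀ be a unital K-algebra whose decomposition satisfies A₀·A₀ ⊆ K·1_A, let B be a unital K-algebra and σ : B → B an involution. Then the linear map R : B⊗A → A⊗B defined by R(b⊗1_A) = 1_A⊗b and R(b⊗a) = a⊗σ(b) for all a∈A₀, b∈B, is an alternative twisting map. -/
import Mathlib


open TensorProduct LinearMap

section TwistPreamble

variable (K : Type*) [Field K]
variable (A : Type*) [NonAssocRing A] [Module K A] [SMulCommClass K A A] [IsScalarTower K A A]
variable (B : Type*) [NonAssocRing B] [Module K B] [SMulCommClass K B B] [IsScalarTower K B B]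

/-- Sweedler helper: sends `Σ aR ⊗ bR` in `A ⊗ B` to `Σ (aR * a'_r) ⊗ (bR)_r`,
where `R((bR) ⊗ a') = a'_r ⊗ (bR)_r`. -/
noncomputable def attpRmul (R : B ⊗[K] A →ₗ[K] A ⊗[K] B) (a' : A) :
    A ⊗[K] B →ₗ[K] A ⊗[K] B :=
  (rTensor B (LinearMap.mul' K A)) ∘ₗ (TensorProduct.assoc K A A B).symm.toLinearMap ∘ₗ
    (lTensor A (R ∘ₗ (TensorProduct.mk K B A).flip a'))

/-- Sweedler helper: sends `Σ aR ⊗ b'R` in `A ⊗ B` to `Σ (aR)_r ⊗ (b'R * b_r)`,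
where `R(b ⊗ aR) = (aR)_r ⊗ b_r`. -/
noncomputable def attpLmul (R : B ⊗[K] A →ₗ[K] A ⊗[K] B) (b : B) :
    A ⊗[K] B →ₗ[K] A ⊗[K] B :=
  (lTensor A ((LinearMap.mul' K B) ∘ₗ (TensorProduct.comm K B B).toLinearMap)) ∘ₗ
    (TensorProduct.assoc K A B B).toLinearMap ∘ₗ
    (rTensor B (R ∘ₗ (TensorProduct.mk K B A) b))

/-- `R : B ⊗ A → A ⊗ B` is an alternative twisting map w.r.t. the decomposition
`A = K·1_A ⊕ A₀`. -/
def IsAltTwistingMap (A₀ : Submodule K A) (R : B ⊗[K] A →ₗ[K] A ⊗[K] B) : Prop :=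
  (∀ a : A, R ((1 : B) ⊗ₜ[K] a) = a ⊗ₜ[K] (1 : B)) ∧
  (∀ b : B, R (b ⊗ₜ[K] (1 : A)) = (1 : A) ⊗ₜ[K] b) ∧
  (∀ (a a' : A) (b : B), R (b ⊗ₜ[K] (a * a')) = attpRmul K A B R a' (R (b ⊗ₜ[K] a))) ∧
  (∀ a ∈ A₀, ∀ b b' : B, R ((b * b') ⊗ₜ[K] a) = attpLmul K A B R b (R (b' ⊗ₜ[K] a)))

/-- `m` is the multiplication of the alternative twisted tensor product `A ⊗̄_R B`:
`(1⊗b)(a'⊗b') = a'_R ⊗ b_R b'` and, for `a ∈ A₀`, `(a⊗b)(a'⊗b') = a a'_R ⊗ b' b_R`. -/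
def IsAltMul (A₀ : Submodule K A) (R : B ⊗[K] A →ₗ[K] A ⊗[K] B)
    (m : A ⊗[K] B →ₗ[K] A ⊗[K] B →ₗ[K] A ⊗[K] B) : Prop :=
  (∀ (b : B) (a' : A) (b' : B),
      m ((1 : A) ⊗ₜ[K] b) (a' ⊗ₜ[K] b') = (lTensor A (mulRight K b')) (R (b ⊗ₜ[K] a'))) ∧
  (∀ a ∈ A₀, ∀ (b : B) (a' : A) (b' : B),
      m (a ⊗ₜ[K] b) (a' ⊗ₜ[K] b') =
        (TensorProduct.map (mulLeft K a) (mulLeft K b')) (R (b ⊗ₜ[K] a')))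

end TwistPreamble

section Aux
variable (K : Type*) [Field K]
variable (A : Type*) [NonAssocRing A] [Module K A] [SMulCommClass K A A] [IsScalarTower K A A]
variable (B : Type*) [NonAssocRing B] [Module K B] [SMulCommClass K B B] [IsScalarTower K B B]

set_option linter.unusedSectionVars false

lemma attpRmul_tmul (R : B ⊗[K] A →ₗ[K] A ⊗[K] B) (a' u : A) (v : B) :
    attpRmul K A B R a' (u ⊗ₜ[K] v) =
      (rTensor B (LinearMap.mul' K A))
        ((TensorProduct.assoc K A A B).symm (u ⊗ₜ[K] R (v ⊗ₜ[K] a'))) := rfl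

lemma attpLmul_tmul (R : B ⊗[K] A →ₗ[K] A ⊗[K] B) (b : B) (u : A) (v : B) :
    attpLmul K A B R b (u ⊗ₜ[K] v) =
      (lTensor A ((LinearMap.mul' K B) ∘ₗ (TensorProduct.comm K B B).toLinearMap))
        ((TensorProduct.assoc K A B B) (R (b ⊗ₜ[K] u) ⊗ₜ[K] v)) := rfl

end Aux

/-- if `A = K·1_A ⊕ A₀` with `A₀·A₀ ⊆ K·1_A` and `σ` is an involution
of `B`, then the map `R : B ⊗ A → A ⊗ B` with `R(b⊗1_A) = 1_A⊗b` and
`R(b⊗a) = a⊗σ(b)` for `a ∈ A₀` is an alternative twisting map. -/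
theorem stmt12 (K A B : Type*) [Field K]
    [NonAssocRing A] [Module K A] [SMulCommClass K A A] [IsScalarTower K A A]
    [NonAssocRing B] [Module K B] [SMulCommClass K B B] [IsScalarTower K B B]
    (A₀ : Submodule K A) (hdec : IsCompl (Submodule.span K {(1 : A)}) A₀)
    (h00 : ∀ x ∈ A₀, ∀ y ∈ A₀, x * y ∈ Submodule.span K {(1 : A)})
    (σ : B →ₗ[K] B) (hσmul : ∀ x y : B, σ (x * y) = σ y * σ x)
    (hσone : σ 1 = 1) (hσinv : ∀ x : B, σ (σ x) = x)
    (R : B ⊗[K] A →ₗ[K] A ⊗[K] B)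
    (hR1 : ∀ b : B, R (b ⊗ₜ[K] (1 : A)) = (1 : A) ⊗ₜ[K] b)
    (hR0 : ∀ a ∈ A₀, ∀ b : B, R (b ⊗ₜ[K] a) = a ⊗ₜ[K] σ b) :
    IsAltTwistingMap K A B A₀ R := by
  have hdecomp : ∀ a : A, ∃ k : K, ∃ x ∈ A₀, a = k • (1 : A) + x := by
    intro a
    have ha : a ∈ Submodule.span K {(1 : A)} ⊔ A₀ := by
      rw [hdec.sup_eq_top]; trivial
    obtain ⟨y, hy, z, hz, hyz⟩ := Submodule.mem_sup.mp ha
    obtain ⟨k, rfl⟩ := Submodule.mem_span_singleton.mp hy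
    exact ⟨k, z, hz, hyz.symm⟩
  have hRgen : ∀ (b : B) (k : K) (x : A), x ∈ A₀ →
      R (b ⊗ₜ[K] (k • (1:A) + x)) = k • ((1:A) ⊗ₜ[K] b) + x ⊗ₜ[K] σ b := by
    intro b k x hx
    rw [tmul_add, map_add, tmul_smul, map_smul, hR1, hR0 x hx]
  refine ⟨?_, hR1, ?_, ?_⟩
  · intro a
    obtain ⟨k, x, hx, rfl⟩ := hdecomp a
    rw [hRgen 1 k x hx, hσone, add_tmul, ← smul_tmul']
  · intro a a' b
    obtain ⟨k, x, hx, rfl⟩ := hdecomp a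
    obtain ⟨k', y, hy, rfl⟩ := hdecomp a'
    obtain ⟨μ, hμ⟩ := Submodule.mem_span_singleton.mp (h00 x hx y hy)
    have hmul : (k • (1:A) + x) * (k' • (1:A) + y)
        = (k * k' + μ) • (1:A) + (k • y + k' • x) := by
      rw [add_mul, mul_add, mul_add, ← hμ]
      simp only [smul_mul_assoc, mul_smul_comm, one_mul, mul_one, smul_smul]
      module
    have hmem : k • y + k' • x ∈ A₀ := A₀.add_mem (A₀.smul_mem _ hy) (A₀.smul_mem _ hx)
    rw [hmul, hRgen b _ _ hmem, hRgen b k x hx, map_add, map_smul,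
      attpRmul_tmul, attpRmul_tmul, hRgen (σ b) k' y hy, hRgen b k' y hy]
    simp only [tmul_add, tmul_smul, map_add, map_smul, TensorProduct.assoc_symm_tmul,
      rTensor_tmul, mul'_apply, hσinv, mul_one, one_mul, add_tmul, ← hμ]
    simp only [← smul_tmul']
    module
  · intro a ha b b'
    rw [hR0 a ha (b * b'), hR0 a ha b', attpLmul_tmul, hR0 a ha b]
    simp only [TensorProduct.assoc_tmul, lTensor_tmul, coe_comp, Function.comp_apply,
      LinearEquiv.coe_coe, TensorProduct.comm_tmul, mul'_apply, hσmul]
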